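/- There exists ε₀ > 0 such that for every 0 < ε ≤ ε₀ the following holds. For each d, let H = H(d) be a (deterministic) subgraph of Q^d such that every connected component of H has at least n^{1/3} vertices and at most n^{10ε} vertices of Q^d lie outside the vertex set of H, where n = 2^d. Then with probability tending to 1 as d → ∞, in the union of H with the random subgraph Q^d_ε, all vertices of H lie in a single connected component. -/

import Mathlib

open MeasureTheory

noncomputable section

/-- The `d`-dimensional hypercube graph on `{0,1}^d`: vertices are adjacent iff they
differ in exactly one coordinate. -/
def cube (d : ℕ) : SimpleGraph (Fin d → Bool) where
  Adj x y := hammingDist x y = 1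
  symm := ⟨fun x y h => by simpa [hammingDist_comm] using h⟩
  loopless := ⟨fun x h => by simp [hammingDist_self] at h⟩

/-- The random spanning subgraph of `cube d` determined by the coin flips `ω`:
an edge of the cube is retained iff its coin shows `true`. -/
def perc (d : ℕ) (ω : Sym2 (Fin d → Bool) → Bool) : SimpleGraph (Fin d → Bool) :=
  SimpleGraph.fromEdgeSet {e | e ∈ (cube d).edgeSet ∧ ω e = true}

/-- Bernoulli measure on `Bool` with success probability `p`. -/
def bern (p : ℝ) : Measure Bool :=
  (ENNReal.ofReal p) • Measure.dirac true + (ENNReal.ofReal (1 - p)) • Measure.dirac false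

/-- The product Bernoulli measure: each potential edge is kept independently with
probability `p`.  Under this measure, `perc d ω` is distributed as `Q^d_p`. -/
def percMeasure (d : ℕ) (p : ℝ) : Measure (Sym2 (Fin d → Bool) → Bool) :=
  Measure.pi fun _ => bern p

open Finset
open scoped Classical

namespace Sprinkle

variable {d : ℕ}

/-- characterization of hamming distance one -/
lemma hamming_one_iff {u v : Fin d → Bool} :
    hammingDist u v = 1 ↔ ∃ i, u i ≠ v i ∧ ∀ j, j ≠ i → u j = v j := by
  rw [hammingDist, Finset.card_eq_one]
  constructor
  · rintro ⟨i, hi⟩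
    refine ⟨i, ?_, ?_⟩
    · have : i ∈ Finset.univ.filter (fun j => u j ≠ v j) := hi ▸ Finset.mem_singleton_self i
      simpa using this
    · intro j hj
      by_contra hne
      have : j ∈ Finset.univ.filter (fun j => u j ≠ v j) := by simpa using hne
      rw [hi] at this
      exact hj (Finset.mem_singleton.mp this)
  · rintro ⟨i, hi, hall⟩
    refine ⟨i, ?_⟩
    ext j
    simp only [Finset.mem_filter, Finset.mem_univ, true_and, Finset.mem_singleton]
    constructor
    · intro hne; by_contra hji; exact hne (hall j hji)
    · rintro rfl; exact hi

lemma eq_update_of_hamming_one {u w : Fin d → Bool} (h : hammingDist u w = 1) :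
    ∃ i, u = Function.update w i (!(w i)) := by
  obtain ⟨i, hi, hall⟩ := hamming_one_iff.mp h
  refine ⟨i, funext fun j => ?_⟩
  rcases eq_or_ne j i with rfl | hj
  · rw [Function.update_self]
    cases hwj : w j <;> cases huj : u j <;> simp_all
  · rw [Function.update_of_ne hj]; exact hall j hj

/-- each vertex has at most `d` cube-neighbours -/
lemma neighbors_card_le (w : Fin d → Bool) :
    (Finset.univ.filter fun u => (cube d).Adj u w).card ≤ d := by
  rcases Nat.eq_zero_or_pos d with rfl | hd
  · refine le_trans (le_of_eq (congrArg Finset.card (Finset.eq_empty_of_forall_notMem ?_))) (by simp)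
    intro u hu
    have h : hammingDist u w = 1 := (Finset.mem_filter.mp hu).2
    obtain ⟨i, _, _⟩ := hamming_one_iff.mp h
    exact absurd i.2 (by omega)
  haveI : Nonempty (Fin d) := ⟨⟨0, hd⟩⟩
  classical
  set f : (Fin d → Bool) → Fin d := fun u =>
    if h : ∃ i, u = Function.update w i (!(w i)) then h.choose else Classical.arbitrary _ with hf
  have hfspec : ∀ u ∈ (Finset.univ.filter fun u => (cube d).Adj u w),
      u = Function.update w (f u) (!(w (f u))) := by
    intro u hu
    have h : hammingDist u w = 1 := (Finset.mem_filter.mp hu).2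
    have hex := eq_update_of_hamming_one h
    simp only [hf, dif_pos hex]
    exact hex.choose_spec
  have : (Finset.univ.filter fun u => (cube d).Adj u w).card ≤ (Finset.univ : Finset (Fin d)).card := by
    apply Finset.card_le_card_of_injOn f (fun _ _ => Finset.mem_univ _)
    intro u₁ hu₁ u₂ hu₂ heq
    rw [hfspec u₁ hu₁, hfspec u₂ hu₂, heq]
  simpa using this


/-- ordered pairs crossing the boundary of `S` -/
def crossPairs (S : Finset (Fin d → Bool)) : Finset ((Fin d → Bool) × (Fin d → Bool)) :=
  (S ×ˢ Sᶜ).filter fun p => (cube d).Adj p.1 p.2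

/-- canonical path vertex: first `k` coordinates from `v`, the rest from `u` -/
def pv (u v : Fin d → Bool) (k : ℕ) : Fin d → Bool := fun j => if (j : ℕ) < k then v j else u j

lemma pv_zero (u v : Fin d → Bool) : pv u v 0 = u :=
  funext fun j => if_neg (Nat.not_lt_zero _)

lemma pv_ge (u v : Fin d → Bool) {k : ℕ} (h : d ≤ k) : pv u v k = v :=
  funext fun j => if_pos (lt_of_lt_of_le j.2 h)

lemma pv_succ_apply (u v : Fin d → Bool) (k : ℕ) (j : Fin d) :
    pv u v (k+1) j = if (j : ℕ) < k then v j else if (j:ℕ) = k then v j else u j := by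
  simp only [pv]
  rcases lt_trichotomy (j : ℕ) k with h | h | h
  · rw [if_pos (by omega), if_pos h]
  · rw [if_pos (by omega), if_neg (by omega), if_pos h]
  · rw [if_neg (by omega), if_neg (by omega), if_neg (by omega)]

lemma pv_diff {u v : Fin d → Bool} {k : ℕ} {j : Fin d} :
    pv u v k j ≠ pv u v (k+1) j ↔ ((j : ℕ) = k ∧ u j ≠ v j) := by
  simp only [pv]
  rcases lt_trichotomy (j : ℕ) k with h | h | h
  · rw [if_pos h, if_pos (by omega)]
    exact ⟨fun hne => absurd rfl hne, fun hc => absurd hc.1 (by omega)⟩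
  · rw [if_neg (by omega), if_pos (by omega)]
    exact ⟨fun hne => ⟨h, hne⟩, fun hc => hc.2⟩
  · rw [if_neg (by omega), if_neg (by omega)]
    exact ⟨fun hne => absurd rfl hne, fun hc => absurd hc.1 (by omega)⟩

/-- index where the canonical path from `u` to `v` first exits `S` -/
def kk (S : Finset (Fin d → Bool)) (u v : Fin d → Bool) : ℕ :=
  if h : ∃ k, pv u v (k+1) ∉ S then Nat.find h else 0

lemma kk_spec (S : Finset (Fin d → Bool)) {u v : Fin d → Bool} (hu : u ∈ S) (hv : v ∉ S) :
    pv u v (kk S u v) ∈ S ∧ pv u v (kk S u v + 1) ∉ S ∧ kk S u v < d := by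
  have hex : ∃ k, pv u v (k+1) ∉ S := ⟨d, by rw [pv_ge u v (by omega)]; exact hv⟩
  have hkk : kk S u v = Nat.find hex := dif_pos hex
  have hnot : pv u v (kk S u v + 1) ∉ S := by rw [hkk]; exact Nat.find_spec hex
  have hmem : pv u v (kk S u v) ∈ S := by
    rcases Nat.eq_zero_or_pos (kk S u v) with h0 | hpos
    · rw [h0, pv_zero]; exact hu
    · obtain ⟨m, hm⟩ := Nat.exists_eq_succ_of_ne_zero (Nat.pos_iff_ne_zero.mp hpos)
      rw [hm]
      by_contra hcon
      have hlt : m < Nat.find hex := by omega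
      exact (Nat.find_min hex hlt) hcon
  refine ⟨hmem, hnot, ?_⟩
  by_contra hge
  rw [pv_ge u v (by omega)] at hmem
  exact hv hmem

/-- canonical-path double counting: `|S||Sᶜ| ≤ |∂S| · 2^d`. -/
lemma card_mul_card_le (S : Finset (Fin d → Bool)) :
    S.card * Sᶜ.card ≤ (crossPairs S).card * 2 ^ d := by
  classical
  have hcard : ((crossPairs S) ×ˢ (Finset.univ : Finset (Fin d → Bool))).card
      = (crossPairs S).card * 2 ^ d := by
    rw [Finset.card_product]
    congr 1
    simp [Finset.card_univ]
  rw [← Finset.card_product, ← hcard]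
  set F : (Fin d → Bool) × (Fin d → Bool) → ((Fin d → Bool) × (Fin d → Bool)) × (Fin d → Bool) :=
    fun p => ((pv p.1 p.2 (kk S p.1 p.2), pv p.1 p.2 (kk S p.1 p.2 + 1)),
      fun j => if (j : ℕ) < kk S p.1 p.2 then p.1 j else p.2 j) with hF
  apply Finset.card_le_card_of_injOn F
  · rintro ⟨u, v⟩ hp
    rw [Finset.mem_coe, Finset.mem_product] at hp
    obtain ⟨hu, hv⟩ := hp
    rw [Finset.mem_compl] at hv
    obtain ⟨hmem, hnot, hlt⟩ := kk_spec S hu hv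
    refine Finset.mem_product.mpr ⟨?_, Finset.mem_univ _⟩
    refine Finset.mem_filter.mpr ⟨Finset.mem_product.mpr ⟨hmem, Finset.mem_compl.mpr hnot⟩, ?_⟩
    show hammingDist _ _ = 1
    rw [hamming_one_iff]
    set k := kk S u v
    have hne : pv u v k ≠ pv u v (k+1) := fun hEq => hnot (hEq ▸ hmem)
    obtain ⟨j, hj⟩ := Function.ne_iff.mp hne
    have hjk := pv_diff.mp hj
    refine ⟨j, hj, fun i hij => ?_⟩
    by_contra hcon
    obtain ⟨hi1, _⟩ := pv_diff.mp hcon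
    obtain ⟨hj1, _⟩ := hjk
    exact hij (Fin.ext (hi1.trans hj1.symm))
  · rintro ⟨u₁, v₁⟩ hp₁ ⟨u₂, v₂⟩ hp₂ hEq
    simp only [Finset.coe_product, Set.mem_prod] at hp₁ hp₂
    obtain ⟨hu₁, hv₁⟩ := hp₁
    obtain ⟨hu₂, hv₂⟩ := hp₂
    rw [Finset.mem_coe, Finset.mem_compl] at hv₁ hv₂
    rw [Finset.mem_coe] at hu₁ hu₂
    obtain ⟨hmem₁, hnot₁, hlt₁⟩ := kk_spec S hu₁ hv₁
    obtain ⟨hmem₂, hnot₂, hlt₂⟩ := kk_spec S hu₂ hv₂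
    set k₁ := kk S u₁ v₁
    set k₂ := kk S u₂ v₂
    simp only [hF, Prod.mk.injEq] at hEq
    obtain ⟨⟨hw, hw'⟩, hm⟩ := hEq
    -- first show k₁ = k₂
    have hne₁ : pv u₁ v₁ k₁ ≠ pv u₁ v₁ (k₁+1) := fun hEq => hnot₁ (hEq ▸ hmem₁)
    obtain ⟨j, hj⟩ := Function.ne_iff.mp hne₁
    have hjk₁ := pv_diff.mp hj
    have hj2 : pv u₂ v₂ k₂ j ≠ pv u₂ v₂ (k₂+1) j := by rw [← hw, ← hw']; exact hj
    obtain ⟨hjk₂, _⟩ := pv_diff.mp hj2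
    obtain ⟨hjk₁', _⟩ := hjk₁
    have hk : k₁ = k₂ := by omega
    -- now reconstruct
    have hu : u₁ = u₂ := by
      funext i
      rcases lt_or_ge (i : ℕ) k₁ with hik | hik
      · have h1 := congrFun hm i
        simpa only [if_pos (show (i:ℕ) < kk S u₁ v₁ from hik), if_pos (show (i:ℕ) < kk S u₂ v₂ from (hk ▸ hik : (i:ℕ) < k₂))] using h1
      · have h1 := congrFun hw i
        simp only [pv, if_neg (show ¬ ((i:ℕ) < kk S u₁ v₁) from (by omega : ¬ ((i:ℕ) < k₁))),
          if_neg (show ¬ ((i:ℕ) < kk S u₂ v₂) from (by rw [← hk]; omega : ¬ ((i:ℕ) < k₂)))] at h1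
        exact h1
    have hv : v₁ = v₂ := by
      funext i
      rcases lt_or_ge (i : ℕ) k₁ with hik | hik
      · have h1 := congrFun hw i
        simpa only [pv, if_pos (show (i:ℕ) < kk S u₁ v₁ from hik), if_pos (show (i:ℕ) < kk S u₂ v₂ from (hk ▸ hik : (i:ℕ) < k₂))] using h1
      · have h1 := congrFun hm i
        simpa only [if_neg (show ¬ ((i:ℕ) < kk S u₁ v₁) from (by omega : ¬ ((i:ℕ) < k₁))),
          if_neg (show ¬ ((i:ℕ) < kk S u₂ v₂) from (by rw [← hk]; omega : ¬ ((i:ℕ) < k₂)))] using h1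
    rw [Prod.mk.injEq]
    exact ⟨hu, hv⟩

/-- weak edge-isoperimetric inequality for the cube -/
lemma iso (S : Finset (Fin d → Bool)) (h : 2 * S.card ≤ 2 ^ d) :
    S.card ≤ 2 * (crossPairs S).card := by
  have h1 := card_mul_card_le S
  have hc : Sᶜ.card = 2 ^ d - S.card := by
    rw [Finset.card_compl]
    congr 1
    simp [Fintype.card_fun]
  have h2 : 2 ^ d ≤ 2 * Sᶜ.card := by omega
  have key : S.card * 2 ^ d ≤ (2 * (crossPairs S).card) * 2 ^ d := by
    calc S.card * 2 ^ d ≤ S.card * (2 * Sᶜ.card) := Nat.mul_le_mul_left _ h2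
    _ = 2 * (S.card * Sᶜ.card) := by ring
    _ ≤ 2 * ((crossPairs S).card * 2 ^ d) := Nat.mul_le_mul_left _ h1
    _ = (2 * (crossPairs S).card) * 2 ^ d := by ring
  exact Nat.le_of_mul_le_mul_right key (by positivity)


variable {d : ℕ} {ε : ℝ}

lemma bern_false (h0 : 0 ≤ ε) : bern ε {false} = ENNReal.ofReal (1 - ε) := by
  simp [bern, Measure.dirac_apply]

lemma bern_univ (h0 : 0 ≤ ε) (h1 : ε ≤ 1) : bern ε Set.univ = 1 := by
  simp only [bern, Measure.add_apply, Measure.smul_apply, measure_univ, smul_eq_mul, mul_one]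
  rw [← ENNReal.ofReal_add h0 (by linarith), add_sub_cancel, ENNReal.ofReal_one]

lemma bern_prob (h0 : 0 ≤ ε) (h1 : ε ≤ 1) : IsProbabilityMeasure (bern ε) :=
  ⟨bern_univ h0 h1⟩

lemma percMeasure_prob (h0 : 0 ≤ ε) (h1 : ε ≤ 1) : IsProbabilityMeasure (percMeasure d ε) := by
  haveI := bern_prob h0 h1
  rw [percMeasure]
  infer_instance

lemma meas_set (s : Set (Sym2 (Fin d → Bool) → Bool)) : MeasurableSet s :=
  s.toFinite.measurableSet

/-- probability that all edges in `Γ` are closed -/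
lemma percMeasure_closed (h0 : 0 ≤ ε) (h1 : ε ≤ 1) (Γ : Finset (Sym2 (Fin d → Bool))) :
    percMeasure d ε {ω | ∀ e ∈ Γ, ω e = false} = ENNReal.ofReal (1 - ε) ^ Γ.card := by
  haveI := bern_prob h0 h1
  haveI : SigmaFinite (bern ε) := inferInstance
  have hset : {ω : Sym2 (Fin d → Bool) → Bool | ∀ e ∈ Γ, ω e = false}
      = Set.pi Set.univ (fun e => if e ∈ Γ then ({false} : Set Bool) else Set.univ) := by
    ext ω
    simp only [Set.mem_setOf_eq, Set.mem_pi, Set.mem_univ, forall_true_left]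
    constructor
    · intro h e
      by_cases he : e ∈ Γ
      · simp [he, h e he]
      · simp [he]
    · intro h e he
      have := h e
      simpa [he] using this
  rw [percMeasure, hset, Measure.pi_pi]
  have : ∀ e : Sym2 (Fin d → Bool),
      bern ε (if e ∈ Γ then ({false} : Set Bool) else Set.univ)
      = if e ∈ Γ then ENNReal.ofReal (1 - ε) else 1 := by
    intro e
    by_cases he : e ∈ Γ
    · rw [if_pos he, if_pos he]; exact bern_false h0
    · rw [if_neg he, if_neg he]; exact bern_univ h0 h1
  rw [Finset.prod_congr rfl (fun e _ => this e)]
  rw [Finset.prod_ite_mem, Finset.univ_inter, Finset.prod_const]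


/-! ### Components of the subgraph -/

variable (H : (cube d).Subgraph)

/-- vertex set of `H` as a finset -/
def Hv : Finset (Fin d → Bool) := H.verts.toFinite.toFinset

lemma mem_Hv {v : Fin d → Bool} : v ∈ Hv H ↔ v ∈ H.verts := Set.Finite.mem_toFinset _

/-- the `H`-component of `v`, as a finset of the ambient cube -/
def clF (v : Fin d → Bool) : Finset (Fin d → Bool) :=
  Finset.univ.filter fun w => H.spanningCoe.Reachable v w

lemma mem_clF {v w : Fin d → Bool} : w ∈ clF H v ↔ H.spanningCoe.Reachable v w := by
  simp [clF]

lemma mem_clF_self (v : Fin d → Bool) : v ∈ clF H v := (mem_clF H).mpr (SimpleGraph.Reachable.refl v)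

lemma clF_eq_of_mem {v w : Fin d → Bool} (h : w ∈ clF H v) : clF H v = clF H w := by
  rw [mem_clF H] at h
  ext u
  rw [mem_clF H, mem_clF H]
  exact ⟨fun hu => h.symm.trans hu, fun hu => h.trans hu⟩

lemma reach_mem {v w : Fin d → Bool} (hv : v ∈ H.verts)
    (h : H.spanningCoe.Reachable v w) : w ∈ H.verts := by
  obtain ⟨p⟩ := h.symm
  cases p with
  | nil => exact hv
  | cons h' _ =>
    rename_i x _
    have : H.Adj w x := by rwa [SimpleGraph.Subgraph.spanningCoe_adj] at h'
    exact this.fst_mem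

lemma clF_subset_Hv {v : Fin d → Bool} (hv : v ∈ Hv H) : clF H v ⊆ Hv H := by
  intro w hw
  rw [mem_Hv] at hv ⊢
  exact reach_mem H hv ((mem_clF H).mp hw)

/-- an injection of `V` into `ℕ` -/
def enc : (Fin d → Bool) → ℕ := fun v => ((Fintype.equivFin (Fin d → Bool)) v : ℕ)

lemma enc_inj : Function.Injective (enc (d := d)) := by
  intro a b h
  have := Fin.ext (h : ((Fintype.equivFin (Fin d → Bool)) a : ℕ) = _)
  exact (Fintype.equivFin (Fin d → Bool)).injective this

/-- canonical representative of the `H`-component of `v` -/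
def rho (v : Fin d → Bool) : Fin d → Bool :=
  Function.invFun enc (((clF H v).image enc).min' ⟨enc v, Finset.mem_image_of_mem _ (mem_clF_self H v)⟩)

lemma rho_mem (v : Fin d → Bool) : rho H v ∈ clF H v := by
  have hmem := Finset.min'_mem ((clF H v).image enc)
    ⟨enc v, Finset.mem_image_of_mem _ (mem_clF_self H v)⟩
  obtain ⟨u, hu, hue⟩ := Finset.mem_image.mp hmem
  have : rho H v = u := by
    rw [rho, ← hue, Function.leftInverse_invFun enc_inj]
  rwa [this]

lemma rho_eq_of_mem {v w : Fin d → Bool} (h : w ∈ clF H v) : rho H v = rho H w := by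
  have hcl : (clF H v).image enc = (clF H w).image enc := by rw [clF_eq_of_mem H h]
  simp only [rho, hcl]

def s0 (d : ℕ) : ℕ := Nat.ceil (((2:ℝ)^d) ^ ((1:ℝ)/3))

/-- every `H`-component has at least `s0 d` vertices -/
lemma clF_card_ge (hcomp : ∀ C : H.coe.ConnectedComponent,
      ((2 : ℝ) ^ d) ^ ((1 : ℝ) / 3) ≤ (C.supp.ncard : ℝ))
    {v : Fin d → Bool} (hv : v ∈ H.verts) :
    s0 d ≤ (clF H v).card := by
  set C := H.coe.connectedComponentMk ⟨v, hv⟩ with hCdef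
  have hC := hcomp C
  have hsub : Subtype.val '' C.supp ⊆ ((clF H v : Finset _) : Set _) := by
    rintro _ ⟨u, hu, rfl⟩
    rw [SimpleGraph.ConnectedComponent.mem_supp_iff] at hu
    have hreach : H.coe.Reachable u ⟨v, hv⟩ := SimpleGraph.ConnectedComponent.exact hu
    have hr : H.spanningCoe.Reachable (↑u) v :=
      SimpleGraph.Reachable.map
        (⟨Subtype.val, fun {a b} hab => by
          rw [SimpleGraph.Subgraph.spanningCoe_adj]; exact hab⟩ : H.coe →g H.spanningCoe) hreach
    exact Finset.mem_coe.mpr ((mem_clF H).mpr hr.symm)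
  have h1 : C.supp.ncard = (Subtype.val '' C.supp).ncard :=
    (Set.ncard_image_of_injective _ Subtype.val_injective).symm
  have h2 : (Subtype.val '' C.supp).ncard ≤ ((clF H v : Finset _) : Set _).ncard :=
    Set.ncard_le_ncard hsub (Set.toFinite _)
  rw [Set.ncard_coe_finset] at h2
  have hfin : ((2:ℝ)^d) ^ ((1:ℝ)/3) ≤ ((clF H v).card : ℝ) := by
    refine le_trans hC ?_
    rw [h1]
    exact_mod_cast h2
  exact Nat.ceil_le.mpr hfin

/-- the family of admissible sides -/
def SS : Finset (Finset (Fin d → Bool)) :=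
  Finset.univ.filter fun S => S.Nonempty ∧ S ⊆ Hv H ∧ (∀ v ∈ S, clF H v ⊆ S) ∧ 2 * S.card ≤ 2 ^ d

lemma mem_SS {S : Finset (Fin d → Bool)} :
    S ∈ SS H ↔ S.Nonempty ∧ S ⊆ Hv H ∧ (∀ v ∈ S, clF H v ⊆ S) ∧ 2 * S.card ≤ 2 ^ d := by
  simp [SS]

/-- the cube edges between `S` and `Hv H \ S` -/
def Gam (S : Finset (Fin d → Bool)) : Finset (Sym2 (Fin d → Bool)) :=
  ((S ×ˢ (Hv H \ S)).filter fun p => (cube d).Adj p.1 p.2).image fun p => s(p.1, p.2)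

lemma rho_idem (v : Fin d → Bool) : rho H (rho H v) = rho H v :=
  (rho_eq_of_mem H (rho_mem H v)).symm

lemma image_mem_self {S : Finset (Fin d → Bool)} (hcl : ∀ v ∈ S, clF H v ⊆ S)
    {r : Fin d → Bool} (hr : r ∈ S.image (rho H)) : r ∈ S := by
  obtain ⟨v, hv, rfl⟩ := Finset.mem_image.mp hr
  exact hcl v hv (rho_mem H v)

lemma biUnion_eq {S : Finset (Fin d → Bool)} (hcl : ∀ v ∈ S, clF H v ⊆ S) :
    S = (S.image (rho H)).biUnion (clF H) := by
  apply Finset.Subset.antisymm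
  · intro v hv
    refine Finset.mem_biUnion.mpr ⟨rho H v, Finset.mem_image_of_mem _ hv, ?_⟩
    rw [← clF_eq_of_mem H (rho_mem H v)]
    exact mem_clF_self H v
  · intro w hw
    obtain ⟨r, hr, hwr⟩ := Finset.mem_biUnion.mp hw
    obtain ⟨v, hv, rfl⟩ := Finset.mem_image.mp hr
    rw [← clF_eq_of_mem H (rho_mem H v)] at hwr
    exact hcl v hv hwr

lemma classes_disjoint {r₁ r₂ : Fin d → Bool} (h₁ : rho H r₁ = r₁) (h₂ : rho H r₂ = r₂)
    (hne : r₁ ≠ r₂) : Disjoint (clF H r₁) (clF H r₂) := by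
  rw [Finset.disjoint_left]
  intro w hw₁ hw₂
  exact hne (by rw [← h₁, rho_eq_of_mem H hw₁, ← rho_eq_of_mem H hw₂, h₂])

lemma rho_image_fixed {S : Finset (Fin d → Bool)} {r : Fin d → Bool}
    (hr : r ∈ S.image (rho H)) : rho H r = r := by
  obtain ⟨v, _, rfl⟩ := Finset.mem_image.mp hr
  exact rho_idem H v

/-- sides in `SS` consisting of `t` components have at least `t * s0 d` vertices -/
lemma card_ge_of_closed
    (hcomp : ∀ C : H.coe.ConnectedComponent,
      ((2 : ℝ) ^ d) ^ ((1 : ℝ) / 3) ≤ (C.supp.ncard : ℝ))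
    {S : Finset (Fin d → Bool)} (hS : S ⊆ Hv H) (hcl : ∀ v ∈ S, clF H v ⊆ S) :
    (S.image (rho H)).card * s0 d ≤ S.card := by
  conv_rhs => rw [biUnion_eq H hcl]
  rw [Finset.card_biUnion (fun r₁ h₁ r₂ h₂ hne =>
    classes_disjoint H (rho_image_fixed H h₁) (rho_image_fixed H h₂) hne)]
  calc (S.image (rho H)).card * s0 d = ∑ _r ∈ S.image (rho H), s0 d := by
        rw [Finset.sum_const, smul_eq_mul]
    _ ≤ ∑ r ∈ S.image (rho H), (clF H r).card := by
        apply Finset.sum_le_sum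
        intro r hr
        exact clF_card_ge H hcomp ((mem_Hv H).mp (hS (image_mem_self H hcl hr)))

/-- `SS` members are recoverable from their set of representatives -/
lemma SS_inj : Set.InjOn (fun S : Finset (Fin d → Bool) => S.image (rho H)) ↑(SS H) := by
  intro S₁ h₁ S₂ h₂ hEq
  rw [Finset.mem_coe, mem_SS] at h₁ h₂
  rw [biUnion_eq H h₁.2.2.1, biUnion_eq H h₂.2.2.1]
  simp only at hEq
  rw [hEq]

lemma card_V : (Finset.univ : Finset (Fin d → Bool)).card = 2 ^ d := by
  rw [Finset.card_univ]
  simp [Fintype.card_fun]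

/-- lower bound on the number of crossing edges of an admissible side -/
lemma Gam_card_ge
    (hcomp : ∀ C : H.coe.ConnectedComponent,
      ((2 : ℝ) ^ d) ^ ((1 : ℝ) / 3) ≤ (C.supp.ncard : ℝ))
    {S : Finset (Fin d → Bool)} (hS : S ∈ SS H) :
    (S.image (rho H)).card * ((s0 d - 2 * (d * ((Hv H)ᶜ).card)) / 2) ≤ (Gam H S).card := by
  obtain ⟨hne, hsub, hcl, hhalf⟩ := (mem_SS H).mp hS
  set b := d * ((Hv H)ᶜ).card with hb
  set t := (S.image (rho H)).card with ht
  set q := (s0 d - 2 * b) / 2 with hq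
  -- the image defining `Gam` is injective on crossing pairs
  have hGam : (Gam H S).card
      = ((S ×ˢ (Hv H \ S)).filter fun p => (cube d).Adj p.1 p.2).card := by
    rw [Gam]
    apply Finset.card_image_of_injOn
    intro p₁ hp₁ p₂ hp₂ hEq
    simp only [Finset.coe_filter, Set.mem_setOf_eq] at hp₁ hp₂
    obtain ⟨hp₁m, _⟩ := hp₁
    obtain ⟨hp₂m, _⟩ := hp₂
    obtain ⟨h₁S, h₁c⟩ := Finset.mem_product.mp hp₁m
    obtain ⟨h₂S, h₂c⟩ := Finset.mem_product.mp hp₂m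
    rcases Sym2.eq_iff.mp hEq with ⟨haa, hb'⟩ | ⟨ha, hb'⟩
    · exact Prod.ext haa hb'
    · exact absurd h₁S (by rw [ha]; exact (Finset.mem_sdiff.mp h₂c).2)
  -- crossing pairs split into those towards `Hv \ S` and those leaving `Hv`
  have hsplit : (crossPairs S).card
      ≤ ((S ×ˢ (Hv H \ S)).filter fun p => (cube d).Adj p.1 p.2).card + b := by
    have hsubs : crossPairs S ⊆
        ((S ×ˢ (Hv H \ S)).filter fun p => (cube d).Adj p.1 p.2)
        ∪ ((S ×ˢ ((Hv H)ᶜ)).filter fun p => (cube d).Adj p.1 p.2) := by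
      intro p hp
      obtain ⟨hpm, hadj⟩ := Finset.mem_filter.mp hp
      obtain ⟨hp1, hp2⟩ := Finset.mem_product.mp hpm
      rw [Finset.mem_compl] at hp2
      rw [Finset.mem_union]
      by_cases hH : p.2 ∈ Hv H
      · exact Or.inl (Finset.mem_filter.mpr
          ⟨Finset.mem_product.mpr ⟨hp1, Finset.mem_sdiff.mpr ⟨hH, hp2⟩⟩, hadj⟩)
      · exact Or.inr (Finset.mem_filter.mpr
          ⟨Finset.mem_product.mpr ⟨hp1, Finset.mem_compl.mpr hH⟩, hadj⟩)
    have hout : ((S ×ˢ ((Hv H)ᶜ)).filter fun p => (cube d).Adj p.1 p.2).card ≤ b := by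
      have hsubs2 : ((S ×ˢ ((Hv H)ᶜ)).filter fun p => (cube d).Adj p.1 p.2) ⊆
          ((Hv H)ᶜ).biUnion fun w =>
            (Finset.univ.filter fun u => (cube d).Adj u w).image fun u => (u, w) := by
        intro p hp
        obtain ⟨hpm, hadj⟩ := Finset.mem_filter.mp hp
        obtain ⟨hp1, hp2⟩ := Finset.mem_product.mp hpm
        refine Finset.mem_biUnion.mpr ⟨p.2, hp2, ?_⟩
        refine Finset.mem_image.mpr ⟨p.1, Finset.mem_filter.mpr ⟨Finset.mem_univ _, hadj⟩, rfl⟩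
      calc ((S ×ˢ ((Hv H)ᶜ)).filter fun p => (cube d).Adj p.1 p.2).card
          ≤ ∑ w ∈ (Hv H)ᶜ, ((Finset.univ.filter fun u => (cube d).Adj u w).image
              fun u => (u, w)).card :=
            le_trans (Finset.card_le_card hsubs2) (Finset.card_biUnion_le)
        _ ≤ ∑ _w ∈ (Hv H)ᶜ, d := by
            apply Finset.sum_le_sum
            intro w _
            exact le_trans Finset.card_image_le (neighbors_card_le w)
        _ = b := by rw [Finset.sum_const, smul_eq_mul, hb, mul_comm]
    calc (crossPairs S).card
        ≤ _ := Finset.card_le_card hsubs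
      _ ≤ _ + _ := Finset.card_union_le _ _
      _ ≤ _ + b := by exact Nat.add_le_add_left hout _
  -- isoperimetry and the component count
  have hiso := iso S hhalf
  have hts : t * s0 d ≤ S.card := card_ge_of_closed H hcomp hsub hcl
  have ht1 : 1 ≤ t := Finset.card_pos.mpr (hne.image _)
  rw [hGam] at *
  set c := ((S ×ˢ (Hv H \ S)).filter fun p => (cube d).Adj p.1 p.2).card
  -- now pure arithmetic: `t * q ≤ c`
  rcases le_or_gt (2 * b) (s0 d) with h2b | h2b
  · have e1 : 2 * q + 2 * b ≤ s0 d := by omega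
    have key : 2 * (t * q) + 2 * b ≤ 2 * c + 2 * b := by
      calc 2 * (t * q) + 2 * b ≤ t * (2 * q) + t * (2 * b) := by
            have h2 : 2 * b ≤ t * (2 * b) := Nat.le_mul_of_pos_left _ (by omega)
            have h3 : 2 * (t * q) = t * (2 * q) := by ring
            omega
        _ = t * (2 * q + 2 * b) := by ring
        _ ≤ t * s0 d := Nat.mul_le_mul_left t e1
        _ ≤ S.card := hts
        _ ≤ 2 * (crossPairs S).card := hiso
        _ ≤ 2 * (c + b) := Nat.mul_le_mul_left 2 hsplit
        _ = 2 * c + 2 * b := by ring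
    have : 2 * (t * q) ≤ 2 * c := by omega
    omega
  · have : q = 0 := by omega
    simp [this]

/-- if not all of `H.verts` is in one component of the sprinkled union, some admissible
side has all its crossing edges closed -/
lemma cover (ω : Sym2 (Fin d → Bool) → Bool)
    (hω : ¬ ∃ C : (H.spanningCoe ⊔ perc d ω).ConnectedComponent, H.verts ⊆ C.supp) :
    ∃ S ∈ SS H, ∀ e ∈ Gam H S, ω e = false := by
  set G := H.spanningCoe ⊔ perc d ω with hG
  have main : ∀ S : Finset (Fin d → Bool), S.Nonempty → S ⊆ Hv H →
      (∀ v ∈ S, clF H v ⊆ S) → 2 * S.card ≤ 2 ^ d →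
      (∀ u ∈ S, ∀ w ∈ Hv H \ S, ¬ G.Adj u w) →
      ∃ S' ∈ SS H, ∀ e ∈ Gam H S', ω e = false := by
    intro S h1 h2 h3 h4 h5
    refine ⟨S, (mem_SS H).mpr ⟨h1, h2, h3, h4⟩, ?_⟩
    intro e he
    obtain ⟨p, hp, rfl⟩ := Finset.mem_image.mp he
    obtain ⟨hpm, hadj⟩ := Finset.mem_filter.mp hp
    obtain ⟨hp1, hp2⟩ := Finset.mem_product.mp hpm
    by_contra hne
    have htrue : ω s(p.1, p.2) = true := by
      cases h : ω s(p.1, p.2)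
      · exact absurd h hne
      · rfl
    have hperc : (perc d ω).Adj p.1 p.2 := by
      rw [perc, SimpleGraph.fromEdgeSet_adj]
      exact ⟨⟨(cube d).mem_edgeSet.mpr hadj, htrue⟩, hadj.ne⟩
    exact h5 p.1 hp1 p.2 hp2 ((SimpleGraph.sup_adj _ _ _ _).mpr (Or.inr hperc))
  rcases Set.eq_empty_or_nonempty H.verts with hE | ⟨v₀, hv₀⟩
  · exact absurd ⟨G.connectedComponentMk (fun _ => false), by
      rw [hE]; exact Set.empty_subset _⟩ hω
  push_neg at hω
  obtain ⟨w₀, hw₀v, hw₀⟩ : ∃ w₀ ∈ H.verts, w₀ ∉ (G.connectedComponentMk v₀).supp := by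
    rcases Set.not_subset.mp (hω (G.connectedComponentMk v₀)) with ⟨w, hw1, hw2⟩
    exact ⟨w, hw1, hw2⟩
  have hw₀r : ¬ G.Reachable v₀ w₀ := by
    intro hr
    exact hw₀ (by
      rw [SimpleGraph.ConnectedComponent.mem_supp_iff]
      exact SimpleGraph.ConnectedComponent.sound hr.symm)
  set A := (Hv H).filter (fun v => G.Reachable v₀ v) with hA
  set B := (Hv H) \ A with hB
  have hv₀A : v₀ ∈ A := Finset.mem_filter.mpr ⟨(mem_Hv H).mpr hv₀, SimpleGraph.Reachable.refl v₀⟩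
  have hw₀B : w₀ ∈ B := Finset.mem_sdiff.mpr
    ⟨(mem_Hv H).mpr hw₀v, fun hc => hw₀r ((Finset.mem_filter.mp hc).2)⟩
  have hcard : B.card + A.card = (Hv H).card := by
    rw [hB]
    exact Finset.card_sdiff_add_card_eq_card (Finset.filter_subset _ _)
  have hHv : (Hv H).card ≤ 2 ^ d := le_trans (Finset.card_le_univ _) (le_of_eq card_V)
  have hclA : ∀ v ∈ A, clF H v ⊆ A := by
    intro v hv w hw
    obtain ⟨hvH, hvr⟩ := Finset.mem_filter.mp hv
    exact Finset.mem_filter.mpr ⟨clF_subset_Hv H hvH hw,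
      hvr.trans (((mem_clF H).mp hw).mono le_sup_left)⟩
  have hclB : ∀ v ∈ B, clF H v ⊆ B := by
    intro v hv w hw
    obtain ⟨hvH, hvnA⟩ := Finset.mem_sdiff.mp hv
    refine Finset.mem_sdiff.mpr ⟨clF_subset_Hv H hvH hw, fun hwA => hvnA ?_⟩
    exact Finset.mem_filter.mpr ⟨hvH,
      ((Finset.mem_filter.mp hwA).2).trans (((mem_clF H).mp hw).mono le_sup_left).symm⟩
  have hadjA : ∀ u ∈ A, ∀ w ∈ Hv H \ A, ¬ G.Adj u w := by
    intro u hu w hw hadj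
    exact (Finset.mem_sdiff.mp hw).2 (Finset.mem_filter.mpr ⟨(Finset.mem_sdiff.mp hw).1,
      ((Finset.mem_filter.mp hu).2).trans hadj.reachable⟩)
  have hadjB : ∀ u ∈ B, ∀ w ∈ Hv H \ B, ¬ G.Adj u w := by
    intro u hu w hw hadj
    obtain ⟨hwH, hwnB⟩ := Finset.mem_sdiff.mp hw
    have hwA : w ∈ A := by
      by_contra hc
      exact hwnB (Finset.mem_sdiff.mpr ⟨hwH, hc⟩)
    have huA : u ∈ A := Finset.mem_filter.mpr ⟨(Finset.mem_sdiff.mp hu).1,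
      ((Finset.mem_filter.mp hwA).2).trans hadj.symm.reachable⟩
    exact (Finset.mem_sdiff.mp hu).2 huA
  rcases le_total A.card B.card with hle | hle
  · exact main A ⟨v₀, hv₀A⟩ (Finset.filter_subset _ _) hclA (by omega) hadjA
  · exact main B ⟨w₀, hw₀B⟩ Finset.sdiff_subset hclB (by omega) hadjB

lemma ncard_compl_eq : ((H.verts)ᶜ).ncard = ((Hv H)ᶜ).card := by
  rw [← Set.ncard_coe_finset]
  congr 1
  rw [Finset.coe_compl]
  congr 1
  exact (Set.Finite.coe_toFinset _).symm

/-- probability of failure is at most `exp(2^d y) - 1` -/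
lemma fail_bound {ε : ℝ} (h0 : 0 ≤ ε) (h1 : ε ≤ 1)
    (hcomp : ∀ C : H.coe.ConnectedComponent,
      ((2 : ℝ) ^ d) ^ ((1 : ℝ) / 3) ≤ (C.supp.ncard : ℝ)) :
    percMeasure d ε
        ({ω | ∃ C : (H.spanningCoe ⊔ perc d ω).ConnectedComponent, H.verts ⊆ C.supp} : Set _)ᶜ
      ≤ ENNReal.ofReal (Real.exp ((2 ^ d : ℝ) *
          (1 - ε) ^ ((s0 d - 2 * (d * ((Hv H)ᶜ).card)) / 2)) - 1) := by
  set q := (s0 d - 2 * (d * ((Hv H)ᶜ).card)) / 2 with hq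
  set y := (1 - ε) ^ q with hy
  have hy0 : 0 ≤ y := pow_nonneg (by linarith) q
  have hcov : ({ω | ∃ C : (H.spanningCoe ⊔ perc d ω).ConnectedComponent,
        H.verts ⊆ C.supp} : Set _)ᶜ
      ⊆ ⋃ S ∈ SS H, {ω | ∀ e ∈ Gam H S, ω e = false} := by
    intro ω hω
    obtain ⟨S, hSmem, hSe⟩ := cover H ω hω
    exact Set.mem_biUnion hSmem hSe
  have hreal : (∑ S ∈ SS H, y ^ (S.image (rho H)).card)
      ≤ Real.exp ((2 ^ d : ℝ) * y) - 1 := by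
    have hinj : ∀ x ∈ SS H, ∀ x' ∈ SS H,
        x.image (rho H) = x'.image (rho H) → x = x' := by
      intro x hx x' hx' hEq
      exact SS_inj H (Finset.mem_coe.mpr hx) (Finset.mem_coe.mpr hx') hEq
    have h1sum : (∑ S ∈ SS H, y ^ (S.image (rho H)).card)
        = ∑ T ∈ (SS H).image (fun S => S.image (rho H)), y ^ T.card := by
      rw [Finset.sum_image hinj]
    have h2sum : (∑ T ∈ (SS H).image (fun S => S.image (rho H)), y ^ T.card)
        ≤ ∑ T ∈ ((Finset.univ : Finset (Fin d → Bool)).powerset).erase ∅, y ^ T.card := by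
      apply Finset.sum_le_sum_of_subset_of_nonneg
      · intro T hT
        obtain ⟨S, hS, rfl⟩ := Finset.mem_image.mp hT
        obtain ⟨hne, _, _, _⟩ := (mem_SS H).mp hS
        exact Finset.mem_erase.mpr ⟨(hne.image _).ne_empty,
          Finset.mem_powerset.mpr (Finset.subset_univ _)⟩
      · intro T _ _
        exact pow_nonneg hy0 _
    have h3sum : (∑ T ∈ ((Finset.univ : Finset (Fin d → Bool)).powerset).erase ∅, y ^ T.card)
        = (y + 1) ^ (2 ^ d) - 1 := by
      have hmem : (∅ : Finset (Fin d → Bool)) ∈ (Finset.univ : Finset (Fin d → Bool)).powerset :=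
        Finset.mem_powerset.mpr (Finset.empty_subset _)
      have hsplit := Finset.add_sum_erase _ (fun T => y ^ T.card) hmem
      have hbin : (∑ T ∈ (Finset.univ : Finset (Fin d → Bool)).powerset, y ^ T.card)
          = (y + 1) ^ (2 ^ d) := by
        have := Finset.prod_add (fun _ : Fin d → Bool => y) (fun _ => (1:ℝ)) Finset.univ
        simp only [Finset.prod_const, Finset.prod_const_one, one_pow, mul_one] at this
        rw [← card_V]
        rw [this]
      rw [hbin] at hsplit
      simp only [Finset.card_empty, pow_zero] at hsplit
      linarith
    have h4 : (y + 1) ^ (2 ^ d) ≤ Real.exp ((2 ^ d : ℝ) * y) := by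
      calc (y + 1) ^ (2 ^ d) ≤ (Real.exp y) ^ (2 ^ d) := by
            apply pow_le_pow_left₀ (by linarith)
            linarith [Real.add_one_le_exp y]
        _ = Real.exp (((2 ^ d : ℕ) : ℝ) * y) := (Real.exp_nat_mul y (2 ^ d)).symm
        _ = Real.exp ((2 ^ d : ℝ) * y) := by norm_num
    calc (∑ S ∈ SS H, y ^ (S.image (rho H)).card) ≤ (y + 1) ^ (2 ^ d) - 1 := by
          rw [h1sum, ← h3sum]; exact h2sum
      _ ≤ Real.exp ((2 ^ d : ℝ) * y) - 1 := by linarith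
  calc percMeasure d ε _
      ≤ percMeasure d ε (⋃ S ∈ SS H, {ω | ∀ e ∈ Gam H S, ω e = false}) := measure_mono hcov
    _ ≤ ∑ S ∈ SS H, percMeasure d ε {ω | ∀ e ∈ Gam H S, ω e = false} :=
        measure_biUnion_finset_le _ _
    _ ≤ ∑ S ∈ SS H, ENNReal.ofReal (y ^ (S.image (rho H)).card) := by
        apply Finset.sum_le_sum
        intro S hS
        rw [percMeasure_closed h0 h1, ← ENNReal.ofReal_pow (by linarith)]
        apply ENNReal.ofReal_le_ofReal
        rw [hy, ← pow_mul]
        exact pow_le_pow_of_le_one (by linarith) (by linarith)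
          (le_trans (le_of_eq (mul_comm q _)) (Gam_card_ge H hcomp hS))
    _ = ENNReal.ofReal (∑ S ∈ SS H, y ^ (S.image (rho H)).card) :=
        (ENNReal.ofReal_sum_of_nonneg (fun S _ => pow_nonneg hy0 _)).symm
    _ ≤ _ := ENNReal.ofReal_le_ofReal hreal

/-- geometric growth beats linear growth -/
lemma geom_lin {r : ℝ} (hr : 1 < r) (C : ℝ) :
    ∀ᶠ n : ℕ in Filter.atTop, C * n + 1 ≤ r ^ n := by
  have hr0 : 0 < r := lt_trans one_pos hr
  set C' : ℝ := max C 0 + 1 with hC'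
  have hC'0 : 0 < C' := by positivity
  have hs0 : (0:ℝ) ≤ r⁻¹ := by positivity
  have hs1 : r⁻¹ < 1 := inv_lt_one_of_one_lt₀ hr
  have h1 := tendsto_self_mul_const_pow_of_lt_one hs0 hs1
  have h2 : ∀ᶠ n : ℕ in Filter.atTop, (n:ℝ) * r⁻¹ ^ n < 1 / (2 * C') :=
    h1.eventually_lt_const (by positivity)
  have h3 : ∀ᶠ n : ℕ in Filter.atTop, (2:ℝ) ≤ r ^ n :=
    (tendsto_pow_atTop_atTop_of_one_lt hr).eventually_ge_atTop 2
  filter_upwards [h2, h3] with n hn2 hn3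
  have hrn : (0:ℝ) < r ^ n := by positivity
  have hinv : r⁻¹ ^ n = (r ^ n)⁻¹ := by rw [inv_pow]
  rw [hinv] at hn2
  have hf1 : (n:ℝ) * (2 * C') < r ^ n := by
    have key : (n:ℝ) < 1 / (2 * C') * r ^ n := by
      calc (n:ℝ) = ((n:ℝ) * (r ^ n)⁻¹) * r ^ n := by field_simp
        _ < 1 / (2 * C') * r ^ n := mul_lt_mul_of_pos_right hn2 hrn
    rw [div_mul_eq_mul_div, one_mul] at key
    exact (lt_div_iff₀ (by positivity)).mp key
  have hf4 : C * n ≤ C' * n := by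
    apply mul_le_mul_of_nonneg_right _ (Nat.cast_nonneg n)
    rw [hC']
    have := le_max_left C 0
    linarith
  nlinarith

lemma one_le_two_pow_real : (1:ℝ) ≤ (2:ℝ) ^ d := one_le_pow₀ (by norm_num)

/-- eventually `(2^d)^{1/3}` dominates the error terms -/
lemma eventual_ineq (M : ℕ) :
    ∀ᶠ d : ℕ in Filter.atTop,
      2 * (M:ℝ) * d + 2 * d * ((2:ℝ)^d) ^ ((1:ℝ)/10) + 1 ≤ ((2:ℝ)^d) ^ ((1:ℝ)/3) := by
  have hρ : (1:ℝ) < (2:ℝ) ^ ((7:ℝ)/30) := Real.one_lt_rpow (by norm_num) (by norm_num)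
  filter_upwards [geom_lin hρ (2*M+4)] with d hd
  set L : ℝ := ((2:ℝ)^d) ^ ((1:ℝ)/30) with hL
  have h2d : (1:ℝ) ≤ (2:ℝ)^d := one_le_two_pow_real
  have h2d0 : (0:ℝ) ≤ (2:ℝ)^d := by positivity
  have hL1 : 1 ≤ L := Real.one_le_rpow h2d (by norm_num)
  have hL3 : ((2:ℝ)^d) ^ ((1:ℝ)/10) = L ^ (3:ℕ) := by
    rw [hL, ← Real.rpow_natCast (((2:ℝ)^d) ^ ((1:ℝ)/30)) 3, ← Real.rpow_mul h2d0]
    norm_num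
  have hL10 : ((2:ℝ)^d) ^ ((1:ℝ)/3) = L ^ (10:ℕ) := by
    rw [hL, ← Real.rpow_natCast (((2:ℝ)^d) ^ ((1:ℝ)/30)) 10, ← Real.rpow_mul h2d0]
    norm_num
  have hL7 : L ^ (7:ℕ) = ((2:ℝ) ^ ((7:ℝ)/30)) ^ d := by
    rw [hL, ← Real.rpow_natCast (((2:ℝ)^d) ^ ((1:ℝ)/30)) 7, ← Real.rpow_mul h2d0,
      ← Real.rpow_natCast (2:ℝ) d, ← Real.rpow_mul (by norm_num),
      ← Real.rpow_natCast ((2:ℝ) ^ ((7:ℝ)/30)) d, ← Real.rpow_mul (by norm_num)]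
    ring_nf
  have key : L^(3:ℕ) * ((2*(M:ℝ)+4) * d + 1) ≤ L^(3:ℕ) * L^(7:ℕ) := by
    apply mul_le_mul_of_nonneg_left _ (by positivity)
    rw [hL7]
    exact hd
  have hL37 : L^(3:ℕ) * L^(7:ℕ) = L^(10:ℕ) := by ring
  rw [hL3, hL10]
  have hd0 : (0:ℝ) ≤ (d:ℝ) := Nat.cast_nonneg d
  have hM0 : (0:ℝ) ≤ (M:ℝ) := Nat.cast_nonneg M
  have h3 : (1:ℝ) ≤ L^(3:ℕ) := one_le_pow₀ hL1
  nlinarith [key, mul_nonneg (mul_nonneg hM0 hd0) (sub_nonneg.mpr h3),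
    mul_nonneg hd0 (sub_nonneg.mpr h3)]

end Sprinkle


open Sprinkle Filter in
/-- Sprinkling: there is `ε₀ > 0` such that for all `0 < ε ≤ ε₀`, if `H = H(d)` is a
subgraph of `Q^d` all of whose components have at least `n^(1/3)` vertices and at most
`n^(10ε)` vertices of `Q^d` lie outside `V(H)`, then whp all vertices of `H` lie in a
single connected component of `H ∪ Q^d_ε`. -/
theorem sprinkling_merges_components :
    ∃ ε₀ : ℝ, 0 < ε₀ ∧ ∀ ε : ℝ, 0 < ε → ε ≤ ε₀ →
      ∀ H : (d : ℕ) → (cube d).Subgraph,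
      (∀ d, ∀ C : (H d).coe.ConnectedComponent,
        ((2 : ℝ) ^ d) ^ ((1 : ℝ) / 3) ≤ (C.supp.ncard : ℝ)) →
      (∀ d, ((((H d).verts)ᶜ).ncard : ℝ) ≤ ((2 : ℝ) ^ d) ^ (10 * ε)) →
      Filter.Tendsto
        (fun d => percMeasure d ε
          {ω | ∃ C : ((H d).spanningCoe ⊔ perc d ω).ConnectedComponent,
            (H d).verts ⊆ C.supp})
        Filter.atTop (nhds 1) := by
  refine ⟨1/100, by norm_num, ?_⟩
  intro ε hε hε' H hcomp hout
  have h0 : 0 ≤ ε := le_of_lt hε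
  have h1 : ε ≤ 1 := by linarith
  have hc0 : (0:ℝ) ≤ 1 - ε := by linarith
  have hc1 : 1 - ε < 1 := by linarith
  set q : ℕ → ℕ := fun d => (s0 d - 2 * (d * ((Hv (H d))ᶜ).card)) / 2 with hqdef
  have hfail : ∀ d, percMeasure d ε
      ({ω | ∃ C : ((H d).spanningCoe ⊔ perc d ω).ConnectedComponent,
        (H d).verts ⊆ C.supp} : Set _)ᶜ
      ≤ ENNReal.ofReal (Real.exp ((2 ^ d : ℝ) * (1 - ε) ^ (q d)) - 1) :=
    fun d => fail_bound (H d) h0 h1 (hcomp d)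
  obtain ⟨M, hM⟩ := ((tendsto_pow_atTop_nhds_zero_of_lt_one hc0 hc1).eventually_lt_const
    (by norm_num : (0:ℝ) < 1/4)).exists
  have hqev : ∀ᶠ d : ℕ in atTop, M * d ≤ q d := by
    have hb : ∀ d : ℕ, ((d * ((Hv (H d))ᶜ).card : ℕ) : ℝ) ≤ (d:ℝ) * ((2:ℝ)^d) ^ ((1:ℝ)/10) := by
      intro d
      push_cast
      apply mul_le_mul_of_nonneg_left _ (Nat.cast_nonneg d)
      calc (((Hv (H d))ᶜ).card : ℝ) = ((((H d).verts)ᶜ).ncard : ℝ) := by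
            rw [ncard_compl_eq]
        _ ≤ ((2:ℝ)^d) ^ (10 * ε) := hout d
        _ ≤ ((2:ℝ)^d) ^ ((1:ℝ)/10) :=
            Real.rpow_le_rpow_of_exponent_le one_le_two_pow_real (by linarith)
    filter_upwards [eventual_ineq M] with d hd
    have hnat : 2 * (M * d) + 2 * (d * ((Hv (H d))ᶜ).card) ≤ s0 d := by
      have hreal : ((2 * (M * d) + 2 * (d * ((Hv (H d))ᶜ).card) : ℕ) : ℝ)
          ≤ ((2:ℝ)^d) ^ ((1:ℝ)/3) := by
        push_cast
        have hb' := hb d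
        push_cast at hb'
        nlinarith [hd]
      have : ((2 * (M * d) + 2 * (d * ((Hv (H d))ᶜ).card) : ℕ) : ℝ) ≤ (s0 d : ℝ) :=
        le_trans hreal (Nat.le_ceil _)
      exact_mod_cast this
    simp only [hqdef]
    set a := M * d with ha
    set b2 := d * ((Hv (H d))ᶜ).card with hb2
    omega
  have hNy : Tendsto (fun d : ℕ => (2^d : ℝ) * (1-ε) ^ (q d)) atTop (nhds 0) := by
    apply tendsto_of_tendsto_of_tendsto_of_le_of_le' tendsto_const_nhds
      (tendsto_pow_atTop_nhds_zero_of_lt_one (by norm_num) (by norm_num : (1:ℝ)/2 < 1))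
    · filter_upwards with d
      positivity
    · filter_upwards [hqev] with d hd
      calc (2^d : ℝ) * (1-ε)^(q d) ≤ (2^d : ℝ) * ((1-ε)^M)^d := by
            apply mul_le_mul_of_nonneg_left _ (by positivity)
            rw [← pow_mul]
            exact pow_le_pow_of_le_one hc0 (by linarith) hd
        _ ≤ (2^d : ℝ) * ((1/4:ℝ))^d := by
            apply mul_le_mul_of_nonneg_left _ (by positivity)
            exact pow_le_pow_left₀ (pow_nonneg hc0 M) (le_of_lt hM) d
        _ = ((1/2:ℝ))^d := by
            rw [← mul_pow]
            norm_num
  have hβ : Tendsto (fun d : ℕ => ENNReal.ofReal (Real.exp ((2^d:ℝ)*(1-ε)^(q d)) - 1))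
      atTop (nhds 0) := by
    have hr : Tendsto (fun d : ℕ => Real.exp ((2^d:ℝ)*(1-ε)^(q d)) - 1) atTop (nhds 0) := by
      have h := (Real.continuous_exp.continuousAt.tendsto.comp hNy).sub
        (tendsto_const_nhds (x := (1:ℝ)))
      simpa using h
    have h := ENNReal.tendsto_ofReal hr
    simpa using h
  have hfail0 : Tendsto (fun d => percMeasure d ε
      ({ω | ∃ C : ((H d).spanningCoe ⊔ perc d ω).ConnectedComponent,
        (H d).verts ⊆ C.supp} : Set _)ᶜ) atTop (nhds 0) :=
    tendsto_of_tendsto_of_tendsto_of_le_of_le tendsto_const_nhds hβ (fun d => zero_le) hfail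
  have hev : ∀ d, percMeasure d ε
      ({ω | ∃ C : ((H d).spanningCoe ⊔ perc d ω).ConnectedComponent,
        (H d).verts ⊆ C.supp} : Set _)
      = 1 - percMeasure d ε
      ({ω | ∃ C : ((H d).spanningCoe ⊔ perc d ω).ConnectedComponent,
        (H d).verts ⊆ C.supp} : Set _)ᶜ := by
    intro d
    haveI := percMeasure_prob (d := d) (ε := ε) h0 h1
    have h := prob_compl_eq_one_sub (μ := percMeasure d ε)
      (s := ({ω | ∃ C : ((H d).spanningCoe ⊔ perc d ω).ConnectedComponent,
        (H d).verts ⊆ C.supp} : Set _)ᶜ) (meas_set _)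
    rw [compl_compl] at h
    exact h
  have hfin : Tendsto (fun d => 1 - percMeasure d ε
      ({ω | ∃ C : ((H d).spanningCoe ⊔ perc d ω).ConnectedComponent,
        (H d).verts ⊆ C.supp} : Set _)ᶜ) atTop (nhds 1) := by
    have h := ((ENNReal.continuous_sub_left ENNReal.one_ne_top).tendsto 0).comp hfail0
    simpa [Function.comp_def] using h
  have heq : (fun d => percMeasure d ε
      {ω | ∃ C : ((H d).spanningCoe ⊔ perc d ω).ConnectedComponent,
        (H d).verts ⊆ C.supp})
      = fun d => 1 - percMeasure d ε
      ({ω | ∃ C : ((H d).spanningCoe ⊔ perc d ω).ConnectedComponent,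
        (H d).verts ⊆ C.supp} : Set _)ᶜ := funext hev
  rw [heq]
  exact hfin
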